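/- If g is a t-cycle in S_t and N is a nilpotent subgroup of S_t containing g, then each Sylow subgroup of N preserves the partition of {1,...,t} into orbits of g^{t/q} for the corresponding prime power q: identifying {1,...,t} with Z/tZ so that g is translation by 1, and writing t = q_1⋯q_ℓ as a product of prime powers for distinct primes p_1,...,p_ℓ, every element h of the Sylow p_j-subgroup of N fixes all coordinates other than the j-th under the CRT identification Z/tZ ≅ Z/q_1Z × ⋯ × Z/q_ℓZ. -/

import Mathlib

theorem sylow_of_nilpotent_fixes_coordinates
    (ℓ : ℕ) (p a : Fin ℓ → ℕ) (hp : ∀ i, (p i).Prime)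
    (hinj : Function.Injective p) (ha : ∀ i, 0 < a i)
    (t : ℕ) (ht : t = ∏ i, p i ^ a i)
    (hdvd : ∀ i, p i ^ a i ∣ t)
    (N : Subgroup (Equiv.Perm (ZMod t))) (hN : Group.IsNilpotent N)
    (hg : (Equiv.addLeft (1 : ZMod t)) ∈ N)
    (j : Fin ℓ) (h : Equiv.Perm (ZMod t)) (hh : h ∈ N)
    (hph : ∃ k : ℕ, orderOf h = p j ^ k) :
    ∀ (x : ZMod t) (i : Fin ℓ), i ≠ j →
      ZMod.castHom (hdvd i) (ZMod (p i ^ a i)) (h x) =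
        ZMod.castHom (hdvd i) (ZMod (p i ^ a i)) x := by
  classical
  have ht0 : t ≠ 0 := by
    rw [ht]
    exact Finset.prod_ne_zero_iff.mpr fun i _ => pow_ne_zero _ (hp i).pos.ne'
  haveI : NeZero t := ⟨ht0⟩
  haveI : Fact (p j).Prime := ⟨hp j⟩
  haveI : Finite N := inferInstance
  -- h as element of N
  set h' : N := ⟨h, hh⟩ with h'def
  obtain ⟨k, hk⟩ := hph
  have hordh' : orderOf h' = p j ^ k := by
    rw [← hk]
    exact (orderOf_injective N.subtype N.subtype_injective h').symm
  -- h' generates a p j - group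
  have hP0 : IsPGroup (p j) (Subgroup.zpowers h') := by
    intro σ
    refine ⟨k, ?_⟩
    have hdv : orderOf (σ : N) ∣ p j ^ k := hordh' ▸ orderOf_dvd_of_mem_zpowers σ.2
    have : (σ : N) ^ (p j ^ k) = 1 := orderOf_dvd_iff_pow_eq_one.mp hdv
    exact Subtype.ext (by simpa using this)
  obtain ⟨P, hle⟩ := hP0.exists_le_sylow
  have htfae := (isNilpotent_of_finite_tfae (G := N)).out 0 3
  have hnormal : (P : Subgroup N).Normal := htfae.mp hN (p j) ⟨hp j⟩ P
  -- Q = image of P in Perm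
  set Q : Subgroup (Equiv.Perm (ZMod t)) := (P : Subgroup N).map N.subtype with Qdef
  have hQp : IsPGroup (p j) Q := P.isPGroup'.map N.subtype
  have hhQ : h ∈ Q := ⟨h', hle (Subgroup.mem_zpowers h'), rfl⟩
  -- all translations belong to N
  have hgc : ∀ c : ZMod t, Equiv.addLeft c ∈ N := by
    have hnat : ∀ m : ℕ, Equiv.addLeft ((m : ZMod t)) ∈ N := by
      intro m
      induction m with
      | zero => simpa using N.one_mem
      | succ m ih =>
        have : Equiv.addLeft ((m + 1 : ℕ) : ZMod t)
            = Equiv.addLeft (1 : ZMod t) * Equiv.addLeft ((m : ZMod t)) := by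
          ext x
          simp [add_assoc, add_comm, add_left_comm]
        rw [this]
        exact N.mul_mem hg ih
    intro c
    obtain ⟨m, rfl⟩ := ZMod.natCast_zmod_surjective (n := t) c
    exact hnat m
  -- Q is stable under conjugation by translations
  have hconj : ∀ (c : ZMod t) (σ : Equiv.Perm (ZMod t)), σ ∈ Q →
      Equiv.addLeft c * σ * (Equiv.addLeft c)⁻¹ ∈ Q := by
    rintro c σ ⟨x, hxP, rfl⟩
    refine ⟨(⟨Equiv.addLeft c, hgc c⟩ : N) * x * (⟨Equiv.addLeft c, hgc c⟩ : N)⁻¹,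
      hnormal.conj_mem x hxP _, rfl⟩
  -- orbits shift under translation
  have hshift : ∀ (c x y : ZMod t), y ∈ MulAction.orbit Q x →
      y + c ∈ MulAction.orbit Q (x + c) := by
    rintro c x y ⟨⟨σ, hσ⟩, rfl⟩
    refine ⟨⟨Equiv.addLeft c * σ * (Equiv.addLeft c)⁻¹, hconj c σ hσ⟩, ?_⟩
    show (Equiv.addLeft c * σ * (Equiv.addLeft c)⁻¹) (x + c) = σ x + c
    simp [Equiv.Perm.mul_apply, add_comm]
  -- the orbit of 0 is an additive subgroup
  have hsub : ∀ y z : ZMod t, y ∈ MulAction.orbit Q 0 → z ∈ MulAction.orbit Q 0 →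
      y - z ∈ MulAction.orbit Q 0 := by
    intro y z hy hz
    have horb : MulAction.orbit Q z = MulAction.orbit Q 0 := MulAction.orbit_eq_iff.mpr hz
    have : y + -z ∈ MulAction.orbit Q (z + -z) := by
      apply hshift (-z) z y
      rw [horb]; exact hy
    rw [sub_eq_add_neg]
    simpa using this
  have h0mem : (0 : ZMod t) ∈ MulAction.orbit Q 0 := MulAction.mem_orbit_self 0
  set H₀ : AddSubgroup (ZMod t) :=
    { carrier := MulAction.orbit Q 0
      zero_mem' := h0mem
      neg_mem' := by
        intro z hz
        simpa using hsub 0 z h0mem hz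
      add_mem' := by
        intro y z hy hz
        have hnz : -z ∈ MulAction.orbit Q 0 := by simpa using hsub 0 z h0mem hz
        simpa using hsub y (-z) hy hnz } with H₀def
  -- cardinality of the orbit is a power of p j
  haveI : Fintype Q := Fintype.ofFinite Q
  have hcard_orbit_dvd : Nat.card H₀ ∣ Nat.card Q := by
    have := MulAction.card_orbit_mul_card_stabilizer_eq_card_group Q (0 : ZMod t)
    have h1 : Fintype.card (MulAction.orbit Q (0 : ZMod t)) ∣ Fintype.card Q :=
      Dvd.intro _ this
    have h2 : Nat.card H₀ = Fintype.card (MulAction.orbit Q (0 : ZMod t)) := by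
      rw [Nat.card_eq_fintype_card]
      exact Fintype.card_congr (Equiv.refl _)
    rw [h2, Nat.card_eq_fintype_card]
    exact h1
  obtain ⟨n, hn⟩ := IsPGroup.iff_card.mp hQp
  obtain ⟨s, _, hs⟩ := (Nat.dvd_prime_pow (hp j)).mp (hn ▸ hcard_orbit_dvd)
  -- cardinality divides t, hence divides p j ^ a j
  have hdvdt : Nat.card H₀ ∣ t := by
    have := AddSubgroup.card_addSubgroup_dvd_card H₀
    rwa [Nat.card_zmod] at this
  have hcop : Nat.Coprime (p j ^ s) (∏ i ∈ Finset.univ.erase j, p i ^ a i) := by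
    apply Nat.Coprime.pow_left
    apply Nat.Coprime.prod_right
    intro i hi
    have hne : p j ≠ p i := fun e => (Finset.mem_erase.mp hi).1 (hinj e.symm)
    exact ((Nat.coprime_primes (hp j) (hp i)).mpr hne).pow_right _
  have hcardqj : Nat.card H₀ ∣ p j ^ a j := by
    rw [hs]
    have htj : t = p j ^ a j * ∏ i ∈ Finset.univ.erase j, p i ^ a i := by
      rw [ht, ← Finset.mul_prod_erase Finset.univ _ (Finset.mem_univ j)]
    exact hcop.dvd_of_dvd_mul_right (by rw [← htj, ← hs]; exact hdvdt)
  -- main argument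
  intro x i hij
  have hhx : h x ∈ MulAction.orbit Q x := ⟨⟨h, hhQ⟩, rfl⟩
  have hd : h x - x ∈ H₀ := by
    have := hshift (-x) x (h x) hhx
    have h2 : h x + -x ∈ MulAction.orbit Q 0 := by simpa [sub_eq_add_neg] using this
    rw [sub_eq_add_neg]; exact h2
  set d : ZMod t := h x - x with ddef
  have hdord : (p j ^ a j) • d = 0 := by
    have h1 : addOrderOf d ∣ Nat.card H₀ := H₀.addOrderOf_dvd_natCard hd
    have h2 : addOrderOf d ∣ p j ^ a j := h1.trans hcardqj
    exact addOrderOf_dvd_iff_nsmul_eq_zero.mp h2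
  -- push to ZMod (p i ^ a i)
  set π := ZMod.castHom (hdvd i) (ZMod (p i ^ a i)) with πdef
  have hπd : ((p j ^ a j : ℕ) : ZMod (p i ^ a i)) * π d = 0 := by
    have := congrArg π hdord
    simpa [nsmul_eq_mul] using this
  have hunit : IsUnit ((p j ^ a j : ℕ) : ZMod (p i ^ a i)) := by
    haveI : NeZero (p i ^ a i) := ⟨pow_ne_zero _ (hp i).pos.ne'⟩
    rw [ZMod.isUnit_iff_coprime]
    have hne : p j ≠ p i := fun e => hij (hinj e.symm)
    exact (((Nat.coprime_primes (hp j) (hp i)).mpr hne).pow _ _)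
  have hπd0 : π d = 0 := by
    rcases hunit with ⟨u, hu⟩
    calc π d = ↑u⁻¹ * (↑u * π d) := by rw [← mul_assoc]; simp
    _ = 0 := by rw [hu, hπd, mul_zero]
  have : π (h x) - π x = 0 := by
    rw [← map_sub]; exact hπd0
  exact sub_eq_zero.mp this
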